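/- Every forest-based unrooted phylogenetic network is tree-based: if N is an unrooted phylogenetic network that contains a spanning forest F with leaf set L(N) such that each tree of F is an induced subgraph of N, then N contains a spanning tree with leaf set L(N). -/

import Mathlib

/-!
Unrooted phylogenetic networks: simple, connected, undirected graphs with
nonempty leaf set and no degree-2 vertices, formalized via `SimpleGraph`.
-/

namespace Paper

variable {V : Type*}

/-- The leaf set of an undirected graph: its vertices of degree 1. -/
def leafSet (G : SimpleGraph V) : Set V := {v : V | (G.neighborSet v).ncard = 1}

/-- `G` is an unrooted phylogenetic network: a simple, connected, undirected
graph with nonempty leaf set and no vertex of degree 2. -/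
def IsUPN (G : SimpleGraph V) : Prop :=
  G.Connected ∧ (leafSet G).Nonempty ∧ ∀ v : V, (G.neighborSet v).ncard ≠ 2

/-- `G` is forest-based: it contains a spanning forest `F` (an acyclic spanning
subgraph) whose set of vertices of degree at most 1 is exactly `leafSet G`, and
such that every edge of `G` has its two ends in different connected components
of `F` (i.e. each tree of `F` is an induced subgraph of `G`). -/
def ForestBasedU (G : SimpleGraph V) : Prop :=
  ∃ F : SimpleGraph V, F ≤ G ∧ F.IsAcyclic ∧
    {v : V | (F.neighborSet v).ncard ≤ 1} = leafSet G ∧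
    ∀ u v : V, G.Adj u v → ¬ F.Adj u v → ¬ F.Reachable u v

/-- `G` is tree-based: it contains a spanning tree (a connected acyclic
spanning subgraph) whose set of degree-1 vertices is exactly `leafSet G`. -/
def TreeBasedU (G : SimpleGraph V) : Prop :=
  ∃ T : SimpleGraph V, T ≤ G ∧ T.Connected ∧ T.IsAcyclic ∧
    {v : V | (T.neighborSet v).ncard = 1} = leafSet G

/-- An (undirected) path in `G`: a nonempty list of pairwise distinct vertices,
consecutive ones joined by edges. -/
def UPath (G : SimpleGraph V) (p : List V) : Prop :=
  p ≠ [] ∧ p.Nodup ∧ p.Chain' G.Adj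

/-- An induced path in `G`: a path whose vertex set induces no edges other than
the consecutive edges of the path. -/
def UInducedPath (G : SimpleGraph V) (p : List V) : Prop :=
  UPath G p ∧ ∀ i j : Fin p.length, G.Adj (p.get i) (p.get j) →
    (j : ℕ) = (i : ℕ) + 1 ∨ (i : ℕ) = (j : ℕ) + 1

/-- The path `p` intersects the leaf set of `G` precisely in its two (distinct)
end vertices. -/
def MeetsLeavesExactlyAtEnds (G : SimpleGraph V) (p : List V) : Prop :=
  ∃ a b : V, p.head? = some a ∧ p.getLast? = some b ∧ a ≠ b ∧
    a ∈ leafSet G ∧ b ∈ leafSet G ∧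
    ∀ v ∈ p, v ∈ leafSet G → v = a ∨ v = b

open SimpleGraph in
lemma reach_sup_edge {H : SimpleGraph V} {u v x y : V}
    (h : (H ⊔ SimpleGraph.edge u v).Reachable x y) :
    H.Reachable x y ∨ (H.Reachable x u ∧ H.Reachable v y) ∨
      (H.Reachable x v ∧ H.Reachable u y) := by
  obtain ⟨w⟩ := h
  induction w with
  | nil => exact Or.inl (Reachable.refl _)
  | @cons a b c hadj w ih =>
    rw [sup_adj] at hadj
    rcases hadj with hadj | hadj
    · have ha : H.Reachable a b := hadj.reachable
      rcases ih with r | ⟨r1, r2⟩ | ⟨r1, r2⟩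
      · exact Or.inl (ha.trans r)
      · exact Or.inr (Or.inl ⟨ha.trans r1, r2⟩)
      · exact Or.inr (Or.inr ⟨ha.trans r1, r2⟩)
    · rw [SimpleGraph.edge_adj] at hadj
      rcases hadj.1 with ⟨rfl, rfl⟩ | ⟨rfl, rfl⟩
      · rcases ih with r | ⟨r1, r2⟩ | ⟨r1, r2⟩
        · exact Or.inr (Or.inl ⟨Reachable.refl _, r⟩)
        · exact Or.inr (Or.inl ⟨Reachable.refl _, r2⟩)
        · exact Or.inl r2
      · rcases ih with r | ⟨r1, r2⟩ | ⟨r1, r2⟩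
        · exact Or.inr (Or.inr ⟨Reachable.refl _, r⟩)
        · exact Or.inl r2
        · exact Or.inr (Or.inl ⟨r1.symm, r1.symm.trans r2⟩)

open SimpleGraph in
lemma isAcyclic_sup_edge {T : SimpleGraph V} {u v : V} (hT : T.IsAcyclic)
    (hR : ¬ T.Reachable u v) : (T ⊔ SimpleGraph.edge u v).IsAcyclic := by
  have hadj : ¬ T.Adj u v := fun h => hR h.reachable
  rw [isAcyclic_iff_forall_adj_isBridge]
  intro x y hxy
  have hxy' := hxy
  rw [sup_adj] at hxy'
  show ¬ ((T ⊔ SimpleGraph.edge u v).deleteEdges {s(x, y)}).Reachable x y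
  rcases hxy' with hxy' | hxy'
  · -- a T-edge
    have hbridge : ¬ (T \ fromEdgeSet {s(x, y)}).Reachable x y := by
      have := isAcyclic_iff_forall_adj_isBridge.mp hT hxy'
      exact this
    intro hreach
    have hle : (T ⊔ SimpleGraph.edge u v) \ fromEdgeSet {s(x, y)} ≤
        (T \ fromEdgeSet {s(x, y)}) ⊔ SimpleGraph.edge u v := by
      rw [sup_sdiff]
      exact sup_le_sup_left sdiff_le _
    have hreach' := hreach.mono hle
    rcases reach_sup_edge hreach' with r | ⟨r1, r2⟩ | ⟨r1, r2⟩
    · exact hbridge r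
    · exact hR ((r1.mono sdiff_le).symm.trans (hxy'.reachable.trans (r2.mono sdiff_le).symm))
    · exact hR ((r2.mono sdiff_le).trans ((r1.mono sdiff_le).symm.trans hxy'.reachable).symm)
  · -- the new edge
    rw [SimpleGraph.edge_adj] at hxy'
    have hkey : (T ⊔ SimpleGraph.edge u v) \ fromEdgeSet {s(u, v)} ≤ T := by
      rw [show SimpleGraph.edge u v = fromEdgeSet {s(u, v)} from rfl, sup_sdiff_right_self]
      exact sdiff_le
    rcases hxy'.1 with ⟨rfl, rfl⟩ | ⟨rfl, rfl⟩
    · exact fun hreach => hR (hreach.mono hkey)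
    · intro hreach
      rw [Sym2.eq_swap] at hreach
      exact hR ((hreach.mono hkey).symm)

lemma preconnected_of_edges {G T : SimpleGraph V} (hG : G.Preconnected)
    (h : ∀ a b : V, G.Adj a b → T.Reachable a b) : T.Preconnected := by
  intro x y
  obtain ⟨w⟩ := hG x y
  induction w with
  | nil => exact SimpleGraph.Reachable.refl _
  | cons hadj w ih => exact (h _ _ hadj).trans ih

/-- Every forest-based unrooted phylogenetic network is
tree-based: if `N` contains a spanning forest `F` with leaf set `L(N)` such
that each tree of `F` is an induced subgraph of `N`, then `N` contains a
spanning tree with leaf set `L(N)`. -/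
theorem forestBased_treeBased
    {V : Type*} [Fintype V] (G : SimpleGraph V)
    (hUPN : IsUPN G) (hFB : ForestBasedU G) :
    TreeBasedU G := by
  classical
  obtain ⟨hGc, ⟨l, hl⟩, _hdeg⟩ := hUPN
  obtain ⟨F, hFG, hFac, hFleaf, _hind⟩ := hFB
  set S : Set (SimpleGraph V) := {H : SimpleGraph V | F ≤ H ∧ H ≤ G ∧ H.IsAcyclic} with hS
  obtain ⟨T, hTmem, hTmax⟩ :=
    (Set.toFinite S).exists_maximal ⟨F, le_refl F, hFG, hFac⟩
  obtain ⟨hFT, hTG, hTac⟩ := hTmem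
  have hpre : T.Preconnected := by
    apply preconnected_of_edges hGc.preconnected
    intro a b hab
    by_contra hR
    have hedgele : SimpleGraph.edge a b ≤ G := by
      intro x y hxy
      rw [SimpleGraph.edge_adj] at hxy
      rcases hxy.1 with ⟨rfl, rfl⟩ | ⟨rfl, rfl⟩
      · exact hab
      · exact hab.symm
    have hmem' : T ⊔ SimpleGraph.edge a b ∈ S := by
      refine ⟨le_trans hFT le_sup_left, sup_le hTG hedgele, isAcyclic_sup_edge hTac hR⟩
    have heq : T = T ⊔ SimpleGraph.edge a b := le_antisymm le_sup_left (hTmax hmem' le_sup_left)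
    apply hR
    have : T.Adj a b := by
      rw [heq, SimpleGraph.sup_adj, SimpleGraph.edge_adj]
      exact Or.inr ⟨Or.inl ⟨rfl, rfl⟩, hab.ne⟩
    exact this.reachable
  haveI : Nonempty V := hGc.nonempty
  refine ⟨T, hTG, SimpleGraph.Connected.mk hpre, hTac, ?_⟩
  ext v
  simp only [Set.mem_setOf_eq]
  constructor
  · intro h1
    rw [← hFleaf]
    have hsub : F.neighborSet v ⊆ T.neighborSet v := fun w hw => hFT hw
    show (F.neighborSet v).ncard ≤ 1
    calc (F.neighborSet v).ncard ≤ (T.neighborSet v).ncard :=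
          Set.ncard_le_ncard hsub (Set.toFinite _)
      _ = 1 := h1
  · intro hv
    have hv' : (G.neighborSet v).ncard = 1 := hv
    have hle : (T.neighborSet v).ncard ≤ 1 := by
      calc (T.neighborSet v).ncard ≤ (G.neighborSet v).ncard :=
            Set.ncard_le_ncard (fun w hw => hTG hw) (Set.toFinite _)
        _ = 1 := hv'
    obtain ⟨m, hm⟩ := Set.ncard_eq_one.mp hl
    have hlm : G.Adj l m := by
      have : m ∈ G.neighborSet l := by rw [hm]; exact rfl
      exact this
    have hne2 : ∃ w : V, w ≠ v := by
      by_cases hvl : v = l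
      · exact ⟨m, by rw [hvl]; exact fun h => G.irrefl (h ▸ hlm)⟩
      · exact ⟨l, fun h => hvl h.symm⟩
    obtain ⟨w, hw⟩ := hne2
    obtain ⟨p⟩ := hpre v w
    have hnonempty : (T.neighborSet v).Nonempty := by
      cases p with
      | nil => exact absurd rfl hw.symm
      | cons hadj _ => exact ⟨_, hadj⟩
    have hpos : 0 < (T.neighborSet v).ncard :=
      (Set.ncard_pos (Set.toFinite _)).mpr hnonempty
    omega

end Paper
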